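/- Let f_1, …, f_K be linearly independent matrix-valued signals in L²(a,b; ℂ^{N×N}). Define recursively g_1 := ⟨f_1,f_1⟩^{-1/2} f_1 and, for k = 2, …, K, ĝ_k := f_k − ∑_{l=1}^{k−1} ⟨f_k, g_l⟩ g_l and g_k := ⟨ĝ_k, ĝ_k⟩^{-1/2} ĝ_k. Then each ĝ_k (k = 2, …, K) is nondegenerate, so the recursion is well-defined, and g_1, …, g_K form an orthonormal set: ⟨g_k, g_l⟩ = δ(k−l)·I_N for all 1 ≤ k, l ≤ K. -/

import Mathlib

open MeasureTheory Matrix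
open scoped ComplexOrder

noncomputable section

/-- The open interval `(a, b)` in `ℝ` with extended-real endpoints. -/
def ival (a b : EReal) : Set ℝ := {t : ℝ | a < (t : EReal) ∧ (t : EReal) < b}

/-- `f` is a matrix-valued signal in `L²(a,b; ℂ^{N×N})`: each of its `N²`
entry functions is in `L²(a,b)`. -/
def IsSignal {N : ℕ} (a b : EReal) (f : ℝ → Matrix (Fin N) (Fin N) ℂ) : Prop :=
  ∀ k l : Fin N, MemLp (fun t => f t k l) 2 (volume.restrict (ival a b))

/-- The matrix-valued inner product `⟨f,g⟩ = ∫ₐᵇ f(t) g(t)† dt`, defined entrywise. -/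
def mvInner {N : ℕ} (a b : EReal) (f g : ℝ → Matrix (Fin N) (Fin N) ℂ) :
    Matrix (Fin N) (Fin N) ℂ :=
  Matrix.of fun k l => ∫ t in ival a b, (f t * (g t)ᴴ) k l

/-- The Frobenius norm of an `N × N` complex matrix. -/
def frobNorm {N : ℕ} (A : Matrix (Fin N) (Fin N) ℂ) : ℝ :=
  Real.sqrt (∑ k, ∑ l, ‖A k l‖ ^ 2)

/-- The positive semidefinite square root of a positive semidefinite matrix
(the former Mathlib `Matrix.PosSemidef.sqrt`, restated with its old definition). -/
def psdSqrt {N : ℕ} {A : Matrix (Fin N) (Fin N) ℂ} (hA : A.PosSemidef) :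
    Matrix (Fin N) (Fin N) ℂ :=
  (hA.1.eigenvectorUnitary : Matrix (Fin N) (Fin N) ℂ) *
    diagonal ((↑) ∘ (√·) ∘ hA.1.eigenvalues) *
    (star (hA.1.eigenvectorUnitary : Matrix (Fin N) (Fin N) ℂ))

/-- Linear independence of matrix-valued signals: whenever `f := ∑ k, F k * f k`
is degenerate (i.e. `⟨f,f⟩` is not invertible), the null space of `(F k)ᴴ`
contains the null space of `⟨f,f⟩`, for every `k`. -/
def LinIndep {N K : ℕ} (a b : EReal) (f : Fin K → ℝ → Matrix (Fin N) (Fin N) ℂ) : Prop :=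
  ∀ F : Fin K → Matrix (Fin N) (Fin N) ℂ,
    ¬ IsUnit (mvInner a b (fun t => ∑ k, F k * f k t) (fun t => ∑ k, F k * f k t)) →
    ∀ (k : Fin K) (u : Fin N → ℂ),
      (mvInner a b (fun t => ∑ j, F j * f j t) (fun t => ∑ j, F j * f j t)).mulVec u = 0 →
      ((F k)ᴴ).mulVec u = 0

section PsdHelpers

lemma psdSqrt_mul_self {N : ℕ} {A : Matrix (Fin N) (Fin N) ℂ} (hA : A.PosSemidef) :
    psdSqrt hA * psdSqrt hA = A := by
  unfold psdSqrt
  set U : Matrix (Fin N) (Fin N) ℂ := (hA.1.eigenvectorUnitary : Matrix (Fin N) (Fin N) ℂ)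
  have hU : star U * U = 1 := Unitary.coe_star_mul_self _
  have hD : diagonal (((↑) ∘ (√·) ∘ hA.1.eigenvalues) : Fin N → ℂ) *
      diagonal ((↑) ∘ (√·) ∘ hA.1.eigenvalues)
      = diagonal (RCLike.ofReal ∘ hA.1.eigenvalues) := by
    rw [diagonal_mul_diagonal]
    congr 1; funext i
    simp only [Function.comp_apply]
    rw [← Complex.ofReal_mul, Real.mul_self_sqrt (hA.eigenvalues_nonneg i)]
    rfl
  calc U * diagonal ((↑) ∘ (√·) ∘ hA.1.eigenvalues) * star U *
        (U * diagonal ((↑) ∘ (√·) ∘ hA.1.eigenvalues) * star U)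
      = U * (diagonal (((↑) ∘ (√·) ∘ hA.1.eigenvalues) : Fin N → ℂ) * (star U * U) *
        diagonal ((↑) ∘ (√·) ∘ hA.1.eigenvalues)) * star U := by
        simp only [Matrix.mul_assoc]
    _ = A := by
        rw [hU, Matrix.mul_one, hD]
        conv_rhs => rw [hA.1.spectral_theorem]
        rfl

lemma psdSqrt_conjTranspose {N : ℕ} {A : Matrix (Fin N) (Fin N) ℂ} (hA : A.PosSemidef) :
    (psdSqrt hA)ᴴ = psdSqrt hA := by
  unfold psdSqrt
  rw [conjTranspose_mul, conjTranspose_mul, diagonal_conjTranspose, star_eq_conjTranspose,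
    conjTranspose_conjTranspose, Matrix.mul_assoc]
  congr 2
  exact congrArg diagonal (funext fun i => Complex.conj_ofReal _)

end PsdHelpers

section Helpers
variable {N : ℕ} {a b : EReal}

lemma integrable_entry {f g : ℝ → Matrix (Fin N) (Fin N) ℂ}
    (hf : IsSignal a b f) (hg : IsSignal a b g) (k l : Fin N) :
    Integrable (fun t => (f t * (g t)ᴴ) k l) (volume.restrict (ival a b)) := by
  have h : (fun t => (f t * (g t)ᴴ) k l)
      = fun t => ∑ m, f t k m * (starRingEnd ℂ) (g t l m) := by
    funext t; simp [Matrix.mul_apply, Matrix.conjTranspose_apply]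
  rw [h]
  apply integrable_finset_sum
  intro m _
  have hgc : MemLp (fun t => (starRingEnd ℂ) (g t l m)) 2 (volume.restrict (ival a b)) :=
    (hg l m).of_le_mul (c := 1) (continuous_star.comp_aestronglyMeasurable (hg l m).1)
      (by simp)
  rw [← memLp_one_iff_integrable]
  haveI : ENNReal.HolderTriple 2 2 1 := ⟨by rw [inv_one]; exact ENNReal.inv_two_add_inv_two⟩
  have := hgc.smul (r := 1) (hf k m)
  exact this

lemma mvInner_conj (f g : ℝ → Matrix (Fin N) (Fin N) ℂ) :
    mvInner a b f g = (mvInner a b g f)ᴴ := by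
  ext k l
  show (∫ t in ival a b, (f t * (g t)ᴴ) k l)
      = (starRingEnd ℂ) (∫ t in ival a b, (g t * (f t)ᴴ) l k)
  rw [← integral_conj]
  congr 1; funext t
  simp only [Matrix.mul_apply, Matrix.conjTranspose_apply, map_sum, _root_.map_mul,
    RCLike.star_def, Complex.conj_conj]
  exact Finset.sum_congr rfl fun m _ => by ring

lemma mvInner_const_mul_left {f g : ℝ → Matrix (Fin N) (Fin N) ℂ}
    (hf : IsSignal a b f) (hg : IsSignal a b g) (A : Matrix (Fin N) (Fin N) ℂ) :
    mvInner a b (fun t => A * f t) g = A * mvInner a b f g := by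
  ext k l
  have h1 : (fun t => ((A * f t) * (g t)ᴴ) k l)
      = fun t => ∑ m, A k m * ((f t * (g t)ᴴ) m l) := by
    funext t; rw [Matrix.mul_assoc]; simp [Matrix.mul_apply]
  show (∫ t in ival a b, ((A * f t) * (g t)ᴴ) k l) = (A * mvInner a b f g) k l
  rw [h1, integral_finset_sum _ (fun m _ => (integrable_entry hf hg m l).const_mul _)]
  simp only [Matrix.mul_apply, mvInner, Matrix.of_apply]
  exact Finset.sum_congr rfl fun m _ => integral_const_mul _ _

lemma mvInner_const_mul_right {f g : ℝ → Matrix (Fin N) (Fin N) ℂ}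
    (hf : IsSignal a b f) (hg : IsSignal a b g) (B : Matrix (Fin N) (Fin N) ℂ) :
    mvInner a b f (fun t => B * g t) = mvInner a b f g * Bᴴ := by
  rw [mvInner_conj f, mvInner_const_mul_left hg hf, Matrix.conjTranspose_mul,
    ← mvInner_conj]

lemma mvInner_sub_left {f h g : ℝ → Matrix (Fin N) (Fin N) ℂ}
    (hf : IsSignal a b f) (hh : IsSignal a b h) (hg : IsSignal a b g) :
    mvInner a b (fun t => f t - h t) g = mvInner a b f g - mvInner a b h g := by
  ext k l
  show (∫ t in ival a b, ((f t - h t) * (g t)ᴴ) k l) = _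
  have h1 : (fun t => ((f t - h t) * (g t)ᴴ) k l)
      = fun t => (f t * (g t)ᴴ) k l - (h t * (g t)ᴴ) k l := by
    funext t; rw [Matrix.sub_mul]; simp [Matrix.sub_apply]
  rw [h1, integral_sub (integrable_entry hf hg k l) (integrable_entry hh hg k l)]
  simp [mvInner, Matrix.sub_apply]

lemma mvInner_sub_right {f h g : ℝ → Matrix (Fin N) (Fin N) ℂ}
    (hf : IsSignal a b f) (hh : IsSignal a b h) (hg : IsSignal a b g) :
    mvInner a b f (fun t => g t - h t) = mvInner a b f g - mvInner a b f h := by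
  rw [mvInner_conj f, mvInner_sub_left hg hh hf, Matrix.conjTranspose_sub,
    ← mvInner_conj, ← mvInner_conj]

lemma mvInner_sum_left {ι : Type*} (s : Finset ι) {F : ι → ℝ → Matrix (Fin N) (Fin N) ℂ}
    {g : ℝ → Matrix (Fin N) (Fin N) ℂ}
    (hF : ∀ j ∈ s, IsSignal a b (F j)) (hg : IsSignal a b g) :
    mvInner a b (fun t => ∑ j ∈ s, F j t) g = ∑ j ∈ s, mvInner a b (F j) g := by
  ext k l
  show (∫ t in ival a b, ((∑ j ∈ s, F j t) * (g t)ᴴ) k l) = _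
  have h1 : (fun t => ((∑ j ∈ s, F j t) * (g t)ᴴ) k l)
      = fun t => ∑ j ∈ s, ((F j t) * (g t)ᴴ) k l := by
    funext t; rw [Finset.sum_mul]; simp [Matrix.sum_apply]
  rw [h1, integral_finset_sum _ (fun j hj => integrable_entry (hF j hj) hg k l)]
  simp [mvInner, Matrix.sum_apply]

lemma mvInner_sum_right {ι : Type*} (s : Finset ι) {F : ι → ℝ → Matrix (Fin N) (Fin N) ℂ}
    {g : ℝ → Matrix (Fin N) (Fin N) ℂ}
    (hF : ∀ j ∈ s, IsSignal a b (F j)) (hg : IsSignal a b g) :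
    mvInner a b g (fun t => ∑ j ∈ s, F j t) = ∑ j ∈ s, mvInner a b g (F j) := by
  rw [mvInner_conj g (fun t => ∑ j ∈ s, F j t), mvInner_sum_left s hF hg,
    Matrix.conjTranspose_sum]
  exact Finset.sum_congr rfl fun j _ => (mvInner_conj g (F j)).symm

lemma isSignal_const_mul {f : ℝ → Matrix (Fin N) (Fin N) ℂ}
    (hf : IsSignal a b f) (A : Matrix (Fin N) (Fin N) ℂ) :
    IsSignal a b (fun t => A * f t) := by
  intro k l
  have h : (fun t => (A * f t) k l) = fun t => ∑ m, A k m * f t m l := by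
    funext t; simp [Matrix.mul_apply]
  rw [h]
  exact memLp_finsetSum _ (fun m _ => (hf m l).const_mul _)

lemma isSignal_sub {f g : ℝ → Matrix (Fin N) (Fin N) ℂ}
    (hf : IsSignal a b f) (hg : IsSignal a b g) :
    IsSignal a b (fun t => f t - g t) := by
  intro k l
  have h : (fun t => (f t - g t) k l) = fun t => f t k l - g t k l := by
    funext t; simp [Matrix.sub_apply]
  rw [h]; exact (hf k l).sub (hg k l)

lemma isSignal_sum {ι : Type*} (s : Finset ι) (F : ι → ℝ → Matrix (Fin N) (Fin N) ℂ)
    (hF : ∀ j ∈ s, IsSignal a b (F j)) :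
    IsSignal a b (fun t => ∑ j ∈ s, F j t) := by
  intro k l
  have h : (fun t => (∑ j ∈ s, F j t) k l) = fun t => ∑ j ∈ s, F j t k l := by
    funext t; simp [Matrix.sum_apply]
  rw [h]
  exact memLp_finsetSum _ (fun j hj => hF j hj k l)

end Helpers

lemma fin_strong_ind {K : ℕ} {P : Fin K → Prop}
    (h : ∀ k, (∀ l, l < k → P l) → P k) : ∀ k, P k := by
  have H : ∀ n : ℕ, ∀ k : Fin K, (k : ℕ) < n → P k := by
    intro n
    induction n with
    | zero => intro k hk; omega
    | succ n ih =>
      intro k hk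
      refine h k fun l hl => ih l ?_
      have hl' : (l : ℕ) < (k : ℕ) := hl
      omega
  intro k
  exact H ((k : ℕ) + 1) k (Nat.lt_succ_self _)

/-- Gram-Schmidt orthonormalization: with
`ghat_k = f_k − ∑_{l<k} ⟨f_k,g_l⟩ g_l` (so `ghat_1 = f_1`) and
`g_k = ⟨ghat_k,ghat_k⟩^{-1/2} ghat_k`, each `ghat_k` is nondegenerate and the `g_k`
form an orthonormal set. -/
theorem stmt_10 {N K : ℕ} (a b : EReal) (hab : a < b)
    (f : Fin K → ℝ → Matrix (Fin N) (Fin N) ℂ) (hf : ∀ k, IsSignal a b (f k))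
    (hli : LinIndep a b f)
    (ghat g : Fin K → ℝ → Matrix (Fin N) (Fin N) ℂ)
    (hghat : ∀ k, ghat k = fun t => f k t - ∑ l ∈ Finset.Iio k, mvInner a b (f k) (g l) * g l t)
    (hpsd : ∀ k, (mvInner a b (ghat k) (ghat k)).PosSemidef)
    (hg : ∀ k, g k = fun t => (psdSqrt (hpsd k))⁻¹ * ghat k t) :
    (∀ k : Fin K, IsUnit (mvInner a b (ghat k) (ghat k))) ∧
      (∀ k l : Fin K, mvInner a b (g k) (g l) = if k = l then 1 else 0) := by
  classical
  -- Step 1: each `ghat k` is a linear combination of the `f j` with coefficient `1` at `k`.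
  have rep : ∀ k : Fin K, ∃ G : Fin K → Matrix (Fin N) (Fin N) ℂ,
      G k = 1 ∧ (∀ j, k < j → G j = 0) ∧ ghat k = fun t => ∑ j, G j * f j t := by
    refine fin_strong_ind ?_
    intro k ih
    choose Gm hGm1 hGm2 hGm3 using ih
    set C : Fin K → Matrix (Fin N) (Fin N) ℂ :=
      fun l => mvInner a b (f k) (g l) * (psdSqrt (hpsd l))⁻¹ with hC
    refine ⟨fun j => (if j = k then 1 else 0) -
      ∑ l ∈ (Finset.Iio k).attach, C l.1 * Gm l.1 (Finset.mem_Iio.mp l.2) j, ?_, ?_, ?_⟩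
    · have hz : ∀ l ∈ (Finset.Iio k).attach,
          C l.1 * Gm l.1 (Finset.mem_Iio.mp l.2) k = 0 := by
        intro l _
        rw [hGm2 l.1 (Finset.mem_Iio.mp l.2) k (Finset.mem_Iio.mp l.2), mul_zero]
      dsimp only
      rw [if_pos rfl, Finset.sum_eq_zero hz, sub_zero]
    · intro j hj
      have hz : ∀ l ∈ (Finset.Iio k).attach,
          C l.1 * Gm l.1 (Finset.mem_Iio.mp l.2) j = 0 := by
        intro l _
        rw [hGm2 l.1 (Finset.mem_Iio.mp l.2) j (lt_trans (Finset.mem_Iio.mp l.2) hj),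
          mul_zero]
      dsimp only
      rw [if_neg (ne_of_gt hj), Finset.sum_eq_zero hz, sub_zero]
    · rw [hghat k]
      funext t
      have hgl : ∀ l (hl : l ∈ Finset.Iio k),
          mvInner a b (f k) (g l) * g l t
            = C l * ∑ j, Gm l (Finset.mem_Iio.mp hl) j * f j t := by
        intro l hl
        have e1 : ghat l t = ∑ j, Gm l (Finset.mem_Iio.mp hl) j * f j t :=
          congrFun (hGm3 l (Finset.mem_Iio.mp hl)) t
        have e2 : g l t = (psdSqrt (hpsd l))⁻¹ * ghat l t := congrFun (hg l) t
        rw [e2, e1, ← Matrix.mul_assoc]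
      calc f k t - ∑ l ∈ Finset.Iio k, mvInner a b (f k) (g l) * g l t
          = f k t - ∑ l ∈ (Finset.Iio k).attach,
              C l.1 * ∑ j, Gm l.1 (Finset.mem_Iio.mp l.2) j * f j t := by
            rw [← Finset.sum_attach (Finset.Iio k)
              (fun l => mvInner a b (f k) (g l) * g l t)]
            congr 1
            exact Finset.sum_congr rfl fun l _ => hgl l.1 l.2
        _ = f k t - ∑ l ∈ (Finset.Iio k).attach,
              ∑ j, C l.1 * Gm l.1 (Finset.mem_Iio.mp l.2) j * f j t := by
            congr 1
            refine Finset.sum_congr rfl fun l _ => ?_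
            rw [Finset.mul_sum]
            exact Finset.sum_congr rfl fun j _ => (Matrix.mul_assoc _ _ _).symm
        _ = (∑ j, (if j = k then (1 : Matrix (Fin N) (Fin N) ℂ) else 0) * f j t)
              - ∑ j, ∑ l ∈ (Finset.Iio k).attach,
                  C l.1 * Gm l.1 (Finset.mem_Iio.mp l.2) j * f j t := by
            rw [Finset.sum_comm]
            congr 1
            simp [ite_mul]
        _ = ∑ j, ((if j = k then (1 : Matrix (Fin N) (Fin N) ℂ) else 0) -
              ∑ l ∈ (Finset.Iio k).attach,
                C l.1 * Gm l.1 (Finset.mem_Iio.mp l.2) j) * f j t := by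
            rw [← Finset.sum_sub_distrib]
            refine Finset.sum_congr rfl fun j _ => ?_
            rw [Matrix.sub_mul, Finset.sum_mul]
  -- Step 2: signals
  have hsig_ghat : ∀ k, IsSignal a b (ghat k) := by
    intro k
    obtain ⟨G, -, -, hid⟩ := rep k
    rw [hid]
    exact isSignal_sum _ _ (fun j _ => isSignal_const_mul (hf j) _)
  have hsig_g : ∀ k, IsSignal a b (g k) := by
    intro k; rw [hg k]; exact isSignal_const_mul (hsig_ghat k) _
  -- Step 3: nondegeneracy
  have hunit : ∀ k, IsUnit (mvInner a b (ghat k) (ghat k)) := by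
    intro k
    by_contra hd
    obtain ⟨G, hGk, -, hid⟩ := rep k
    rw [hid] at hd
    have hdet : (mvInner a b (fun t => ∑ j, G j * f j t)
        (fun t => ∑ j, G j * f j t)).det = 0 := by
      by_contra h0
      exact hd ((Matrix.isUnit_iff_isUnit_det _).mpr (isUnit_iff_ne_zero.mpr h0))
    obtain ⟨v, hv0, hvz⟩ := (Matrix.exists_mulVec_eq_zero_iff).mpr hdet
    have := hli G hd k v hvz
    rw [hGk, Matrix.conjTranspose_one, Matrix.one_mulVec] at this
    exact hv0 this
  -- Step 4: sqrt invertible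
  have hSunit : ∀ k, IsUnit (psdSqrt (hpsd k)).det := by
    intro k
    have h1 : IsUnit (psdSqrt (hpsd k) * psdSqrt (hpsd k)).det := by
      rw [psdSqrt_mul_self (hpsd k)]
      exact (Matrix.isUnit_iff_isUnit_det _).mp (hunit k)
    rw [Matrix.det_mul] at h1
    exact isUnit_of_mul_isUnit_left h1
  -- Step 5: diagonal
  have hdiag : ∀ k, mvInner a b (g k) (g k) = 1 := by
    intro k
    set S := psdSqrt (hpsd k) with hS
    have hsh : Sᴴ = S := psdSqrt_conjTranspose (hpsd k)
    rw [hg k, ← hS,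
      mvInner_const_mul_left (hsig_ghat k) (isSignal_const_mul (hsig_ghat k) S⁻¹),
      mvInner_const_mul_right (hsig_ghat k) (hsig_ghat k),
      Matrix.conjTranspose_nonsing_inv, hsh, ← psdSqrt_mul_self (hpsd k), ← hS,
      Matrix.mul_assoc S S S⁻¹, Matrix.mul_nonsing_inv S (hSunit k), Matrix.mul_one,
      Matrix.nonsing_inv_mul S (hSunit k)]
  -- Step 6: off-diagonal
  have hoff : ∀ j : Fin K, ∀ i, i < j → mvInner a b (g i) (g j) = 0 := by
    refine fin_strong_ind ?_
    intro j ih i hij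
    have hsig_sum : IsSignal a b
        (fun t => ∑ l ∈ Finset.Iio j, mvInner a b (f j) (g l) * g l t) :=
      isSignal_sum _ _ (fun l _ => isSignal_const_mul (hsig_g l) _)
    have h1 : mvInner a b (g i) (ghat j) = 0 := by
      rw [hghat j,
        mvInner_sub_right (hsig_g i) hsig_sum (hf j),
        mvInner_sum_right (Finset.Iio j)
          (fun l _ => isSignal_const_mul (hsig_g l) _) (hsig_g i)]
      have hterm : ∀ l ∈ Finset.Iio j,
          mvInner a b (g i) (fun t => mvInner a b (f j) (g l) * g l t)
            = (if l = i then (mvInner a b (f j) (g i))ᴴ else 0) := by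
        intro l hl
        rw [mvInner_const_mul_right (hsig_g i) (hsig_g l)]
        rcases eq_or_ne l i with h | h
        · subst h
          rw [hdiag l, Matrix.one_mul, if_pos rfl]
        · rw [if_neg h]
          rcases lt_or_gt_of_ne h with hli' | hli'
          · -- l < i : ⟨g i, g l⟩ = (⟨g l, g i⟩)ᴴ = 0
            rw [mvInner_conj, ih i hij l hli', Matrix.conjTranspose_zero,
              Matrix.zero_mul]
          · -- i < l, l < j
            rw [ih l (Finset.mem_Iio.mp hl) i hli', Matrix.zero_mul]
      rw [Finset.sum_congr rfl hterm, Finset.sum_ite_eq'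
        (Finset.Iio j) i (fun _ => (mvInner a b (f j) (g i))ᴴ),
        if_pos (Finset.mem_Iio.mpr hij), ← mvInner_conj, sub_self]
    rw [hg j, mvInner_const_mul_right (hsig_g i) (hsig_ghat j), h1, Matrix.zero_mul]
  -- conclusion
  refine ⟨hunit, ?_⟩
  intro k l
  rcases lt_trichotomy k l with h | h | h
  · rw [if_neg (ne_of_lt h), hoff l k h]
  · subst h; rw [if_pos rfl, hdiag]
  · rw [if_neg (ne_of_gt h), mvInner_conj, hoff k l h, Matrix.conjTranspose_zero]


end
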